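/- For all real b, all real c with 0 < |c| ≤ π, and all t in (0,1) such that the denominator t(b²+c²)(cos(2ct)-1) + t²b²c·sin(2ct) is nonzero, one has -((b²+c²)(cos(2ct)-1) + 2t²b²c²cos(2ct) - 2tc³sin(2ct)) / (t(b²+c²)(cos(2ct)-1) + t²b²c·sin(2ct)) ≥ -5/t. -/

import Mathlib

open Real

/-- Generic helper: nonnegativity on `[0,∞)` from derivative sign. -/
lemma aux_nonneg {f f' : ℝ → ℝ} (hd : ∀ x, HasDerivAt f (f' x) x) (h0 : f 0 = 0)
    (hf' : ∀ x, 0 ≤ x → 0 ≤ f' x) {x : ℝ} (hx : 0 ≤ x) : 0 ≤ f x := by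
  have hmono : MonotoneOn f (Set.Ici 0) := by
    apply monotoneOn_of_deriv_nonneg (convex_Ici 0)
    · exact fun y _ => (hd y).differentiableAt.continuousAt.continuousWithinAt
    · exact fun y _ => (hd y).differentiableAt.differentiableWithinAt
    · intro y hy
      rw [(hd y).deriv]
      rw [interior_Ici] at hy
      exact hf' y (le_of_lt hy)
  have := hmono (Set.self_mem_Ici) (Set.mem_Ici.2 hx) hx
  linarith [h0 ▸ this]

lemma sin_ge_cubic {x : ℝ} (hx : 0 ≤ x) : x - x ^ 3 / 6 ≤ Real.sin x := by
  have h := aux_nonneg (f := fun u : ℝ => Real.sin u - (u - u ^ 3 / 6))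
    (f' := fun u : ℝ => Real.cos u - (1 - u ^ 2 / 2)) ?_ (by simp) ?_ hx
  · linarith
  · intro y
    have h1 := Real.hasDerivAt_sin y
    have h2 : HasDerivAt (fun u : ℝ => u - u ^ 3 / 6) (1 - y ^ 2 / 2) y := by
      have := (hasDerivAt_id y).sub ((hasDerivAt_pow 3 y).div_const 6)
      exact this.congr_deriv (by norm_num; ring)
    exact h1.sub h2
  · intro y _
    have := Real.one_sub_sq_div_two_le_cos (x := y)
    linarith

lemma cos_le_quartic {x : ℝ} (hx : 0 ≤ x) : Real.cos x ≤ 1 - x ^ 2 / 2 + x ^ 4 / 24 := by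
  have h := aux_nonneg (f := fun u : ℝ => 1 - u ^ 2 / 2 + u ^ 4 / 24 - Real.cos u)
    (f' := fun u : ℝ => -u + u ^ 3 / 6 + Real.sin u) ?_ (by simp) ?_ hx
  · linarith
  · intro y
    have h1 : HasDerivAt (fun u : ℝ => 1 - u ^ 2 / 2 + u ^ 4 / 24)
        (-y + y ^ 3 / 6) y := by
      have := (((hasDerivAt_const y (1:ℝ)).sub ((hasDerivAt_pow 2 y).div_const 2)).add
        ((hasDerivAt_pow 4 y).div_const 24))
      exact this.congr_deriv (by norm_num; ring)
    have := h1.sub (Real.hasDerivAt_cos y)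
    exact this.congr_deriv (by ring)
  · intro y hy
    have := sin_ge_cubic hy
    linarith

lemma sin_le_quintic {x : ℝ} (hx : 0 ≤ x) :
    Real.sin x ≤ x - x ^ 3 / 6 + x ^ 5 / 120 := by
  have h := aux_nonneg (f := fun u : ℝ => u - u ^ 3 / 6 + u ^ 5 / 120 - Real.sin u)
    (f' := fun u : ℝ => 1 - u ^ 2 / 2 + u ^ 4 / 24 - Real.cos u) ?_ (by simp) ?_ hx
  · linarith
  · intro y
    have h1 : HasDerivAt (fun u : ℝ => u - u ^ 3 / 6 + u ^ 5 / 120)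
        (1 - y ^ 2 / 2 + y ^ 4 / 24) y := by
      have := (((hasDerivAt_id y).sub ((hasDerivAt_pow 3 y).div_const 6)).add
        ((hasDerivAt_pow 5 y).div_const 120))
      exact this.congr_deriv (by norm_num; ring)
    exact h1.sub (Real.hasDerivAt_sin y)
  · intro y hy
    have := cos_le_quartic hy
    linarith

lemma mul_cos_le_sin {x : ℝ} (hx0 : 0 ≤ x) (hxπ : x ≤ π) : x * Real.cos x ≤ Real.sin x := by
  by_cases hc : Real.cos x ≤ 0
  · have hs := Real.sin_nonneg_of_nonneg_of_le_pi hx0 hxπ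
    nlinarith
  · push_neg at hc
    have hx2 : x < π / 2 := by
      by_contra h
      push_neg at h
      have := Real.cos_nonpos_of_pi_div_two_le_of_le h (by linarith [Real.pi_pos])
      linarith
    rcases eq_or_lt_of_le hx0 with h0 | h0
    · simp [← h0]
    · have ht := Real.lt_tan h0 hx2
      rw [Real.tan_eq_sin_div_cos] at ht
      have h2 := mul_lt_mul_of_pos_right ht hc
      rw [div_mul_cancel₀ _ (ne_of_gt hc)] at h2
      exact h2.le

lemma h_nonpos {u : ℝ} (h0 : 0 ≤ u) (h2 : u ≤ 2 * π) :
    (8 - u ^ 2) * Real.cos u - 8 + 5 * u * Real.sin u ≤ 0 := by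
  rcases le_or_gt u 2.82 with hu | hu
  · -- Taylor regime
    have h8 : 0 ≤ 8 - u ^ 2 := by nlinarith
    have hc := cos_le_quartic h0
    have hs := sin_le_quintic h0
    nlinarith [mul_nonneg h8 (sub_nonneg.2 hc), mul_nonneg (by linarith : (0:ℝ) ≤ 5 * u)
      (sub_nonneg.2 hs)]
  · have hπ1 := Real.pi_gt_d2
    have hπ2 := Real.pi_lt_d2
    rcases le_or_gt u π with hu2 | hu2
    · -- u ∈ (2.82, π]
      have hs0 : 0 ≤ Real.sin u := Real.sin_nonneg_of_nonneg_of_le_pi h0 hu2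
      have hs1 : Real.sin u ≤ π - u := by
        rw [← Real.sin_pi_sub]
        exact Real.sin_le (by linarith)
      have hcn : Real.cos u ≤ 0 :=
        Real.cos_nonpos_of_pi_div_two_le_of_le (by linarith) (by linarith)
      have hc1 : -1 ≤ Real.cos u := Real.neg_one_le_cos u
      nlinarith [mul_nonneg (sub_nonneg.2 hc1) (by nlinarith : (0:ℝ) ≤ u ^ 2 - 7.9),
        mul_nonneg (neg_nonneg.2 hcn) (by nlinarith : (0:ℝ) ≤ u ^ 2 - 7.9),
        mul_nonneg (by linarith : (0:ℝ) ≤ 5 * u) (sub_nonneg.2 hs1),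
        mul_nonneg (by linarith : (0:ℝ) ≤ π - u) (by linarith : (0:ℝ) ≤ u - 2.82)]
    · rcases le_or_gt u (3 * π / 2) with hu3 | hu3
      · -- u ∈ (π, 3π/2]
        set v := u - π with hv
        have hv0 : 0 ≤ v := by simp [hv]; linarith
        have hv2 : v ≤ π / 2 := by simp [hv]; linarith
        have hsv : 2 / π * v ≤ Real.sin v := Real.mul_le_sin hv0 hv2
        have h2v : 2 * v ≤ π * Real.sin v := by
          have hp := Real.pi_pos
          have := mul_le_mul_of_nonneg_left hsv hp.le
          calc 2 * v = π * (2 / π * v) := by field_simp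
            _ ≤ π * Real.sin v := this
        have hcu : Real.cos u = -Real.cos v := by
          rw [hv, show u = π + (u - π) by ring]
          simp [Real.cos_add]
        have hsu : Real.sin u = -Real.sin v := by
          rw [hv, show u = π + (u - π) by ring]
          simp [Real.sin_add]
        have hcv : Real.cos v ≤ 1 := Real.cos_le_one v
        have hu8 : 0 ≤ u ^ 2 - 8 := by nlinarith
        rw [hcu, hsu]
        -- goal : (8 - u^2) * (-cos v) - 8 + 5*u*(-sin v) ≤ 0
        by_contra hcon
        push_neg at hcon
        have hp := Real.pi_pos
        nlinarith [mul_pos hp hcon, mul_nonneg hu8 (sub_nonneg.2 hcv),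
          mul_nonneg (mul_nonneg hp.le hu8) (sub_nonneg.2 hcv),
          mul_nonneg (by linarith : (0:ℝ) ≤ 5 * u) (by linarith : (0:ℝ) ≤ π * Real.sin v - 2 * v),
          mul_nonneg hv0 hv0]
      · -- u ∈ (3π/2, 2π]
        have hcos : 0 ≤ Real.cos u := by
          rw [← Real.cos_two_pi_sub]
          apply Real.cos_nonneg_of_mem_Icc
          constructor <;> [linarith [Real.pi_pos]; linarith]
        have hsin : Real.sin u ≤ 0 := by
          have : 0 ≤ Real.sin (2 * π - u) :=
            Real.sin_nonneg_of_nonneg_of_le_pi (by linarith) (by linarith)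
          rw [Real.sin_two_pi_sub] at this
          linarith
        have h8 : 8 - u ^ 2 ≤ 0 := by nlinarith
        nlinarith [mul_nonneg hcos (neg_nonneg.2 h8), mul_nonpos_of_nonneg_of_nonpos
          (by linarith : (0:ℝ) ≤ 5 * u) hsin]

/-- The key estimate for positive `c`. -/
lemma trace_F1_estimate_pos (b c t : ℝ) (hc : 0 < c) (hcπ : c ≤ π)
    (ht0 : 0 < t) (ht1 : t < 1) :
    -((b ^ 2 + c ^ 2) * (Real.cos (2 * c * t) - 1)
        + 2 * t ^ 2 * b ^ 2 * c ^ 2 * Real.cos (2 * c * t)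
        - 2 * t * c ^ 3 * Real.sin (2 * c * t)) /
      (t * (b ^ 2 + c ^ 2) * (Real.cos (2 * c * t) - 1)
        + t ^ 2 * b ^ 2 * c * Real.sin (2 * c * t)) ≥ -5 / t := by
  have hx0 : 0 < c * t := mul_pos hc ht0
  have hxπ : c * t < π := by nlinarith
  set s := Real.sin (c * t) with hs_def
  set co := Real.cos (c * t) with hco_def
  have hs : 0 < s := Real.sin_pos_of_pos_of_lt_pi hx0 hxπ
  have hA : (c * t) * co ≤ s := mul_cos_le_sin hx0.le hxπ.le
  have hp : s ^ 2 + co ^ 2 = 1 := by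
    rw [hs_def, hco_def]; exact Real.sin_sq_add_cos_sq (c * t)
  have e1 : Real.cos (2 * c * t) = 1 - 2 * s ^ 2 := by
    rw [show 2 * c * t = 2 * (c * t) by ring, Real.cos_two_mul', ← hs_def, ← hco_def]
    linear_combination hp
  have e2 : Real.sin (2 * c * t) = 2 * s * co := by
    rw [show 2 * c * t = 2 * (c * t) by ring, Real.sin_two_mul, ← hs_def, ← hco_def]
  have hh : (8 - (2 * c * t) ^ 2) * (1 - 2 * s ^ 2) - 8
      + 5 * (2 * c * t) * (2 * s * co) ≤ 0 := by
    have h1 := h_nonpos (u := 2 * (c * t)) (by positivity) (by linarith)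
    rw [show (2 : ℝ) * (c * t) = 2 * c * t by ring, e1, e2] at h1
    exact h1
  have hbr : 0 < (b ^ 2 + c ^ 2) * s - t * b ^ 2 * c * co := by
    rcases le_or_gt co 0 with hco | hco
    · nlinarith [mul_pos (by positivity : (0:ℝ) < b ^ 2 + c ^ 2) hs,
        mul_nonneg (mul_nonneg (mul_nonneg ht0.le (sq_nonneg b)) hc.le) (neg_nonneg.2 hco)]
    · nlinarith [mul_le_mul_of_nonneg_left hA (by positivity : (0:ℝ) ≤ b ^ 2 + c ^ 2),
        mul_pos (mul_pos (mul_pos (pow_pos hc 3) ht0) hco) (by norm_num : (0:ℝ) < 1)]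
  rw [e1, e2]
  have hD : t * (b ^ 2 + c ^ 2) * (1 - 2 * s ^ 2 - 1) + t ^ 2 * b ^ 2 * c * (2 * s * co) < 0 := by
    have := mul_pos (mul_pos ht0 hs) hbr
    nlinarith [this]
  rw [ge_iff_le, le_div_iff_of_neg hD, div_mul_eq_mul_div, le_div_iff₀ ht0]
  nlinarith [mul_nonneg (mul_nonneg ht0.le (sq_nonneg b)) (neg_nonneg.2 hh),
    mul_nonneg (mul_nonneg (mul_nonneg ht0.le (sq_nonneg c)) hs.le) (sub_nonneg.2 hA),
    mul_nonneg (mul_nonneg (mul_nonneg ht0.le (sq_nonneg c)) hs.le) hs.le]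

/-- The key trace estimate `tr F₁(1-t) ≥ -5/t` on the Heisenberg group. -/
theorem trace_F1_estimate (b c t : ℝ) (hc0 : 0 < |c|) (hcπ : |c| ≤ π)
    (ht0 : 0 < t) (ht1 : t < 1)
    (hden : t * (b ^ 2 + c ^ 2) * (Real.cos (2 * c * t) - 1)
      + t ^ 2 * b ^ 2 * c * Real.sin (2 * c * t) ≠ 0) :
    -((b ^ 2 + c ^ 2) * (Real.cos (2 * c * t) - 1)
        + 2 * t ^ 2 * b ^ 2 * c ^ 2 * Real.cos (2 * c * t)
        - 2 * t * c ^ 3 * Real.sin (2 * c * t)) /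
      (t * (b ^ 2 + c ^ 2) * (Real.cos (2 * c * t) - 1)
        + t ^ 2 * b ^ 2 * c * Real.sin (2 * c * t)) ≥ -5 / t := by
  rcases lt_trichotomy c 0 with hc | hc | hc
  · have hcπ' : -c ≤ π := by rwa [abs_of_neg hc] at hcπ
    have h := trace_F1_estimate_pos b (-c) t (by linarith) hcπ' ht0 ht1
    have e1 : Real.cos (2 * -c * t) = Real.cos (2 * c * t) := by
      rw [show 2 * -c * t = -(2 * c * t) by ring, Real.cos_neg]
    have e2 : Real.sin (2 * -c * t) = -Real.sin (2 * c * t) := by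
      rw [show 2 * -c * t = -(2 * c * t) by ring, Real.sin_neg]
    rw [e1, e2] at h
    convert h using 2 <;> ring
  · simp [hc] at hc0
  · exact trace_F1_estimate_pos b c t hc (by rwa [abs_of_pos hc] at hcπ) ht0 ht1
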